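/- For every integer k ≥ 2, the complete bipartite graph K_{2,k} is D-minimal for the Maker–Breaker total domination game: K_{2,k} is a D graph, and for every edge e of K_{2,k} the graph K_{2,k} − e is not a D graph. -/
import Mathlib


namespace MBTD

variable {V : Type*} [Fintype V] [DecidableEq V]

/-- `a` is a total dominating set of `G`: every vertex has a neighbour in `a`. -/
def IsTotalDomSet (G : SimpleGraph V) (a : Finset V) : Prop :=
  ∀ v : V, ∃ u ∈ a, G.Adj u v

/-- `WinsAux win n turn a b` describes the generic positional game in which two players
alternately claim previously unclaimed vertices until every vertex is claimed.
Here `a` is the set of vertices claimed so far by the tracked player, `b` the set claimed by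
the opponent, `turn = true` iff the tracked player is the next to move, and `n` is the number
of moves still to be played.  The tracked player wins iff `win` holds of the final position. -/
def WinsAux (win : Finset V → Finset V → Prop) : ℕ → Bool → Finset V → Finset V → Prop
  | 0, _, a, b => win a b
  | n + 1, true, a, b => ∃ v ∈ Finset.univ \ (a ∪ b), WinsAux win n false (insert v a) b
  | n + 1, false, a, b => ∀ v ∈ Finset.univ \ (a ∪ b), WinsAux win n true a (insert v b)

/-- Dominator has a winning strategy in the Maker-Breaker total domination game on `G`,
where `dFirst = true` means Dominator moves first (the D-game) and `dFirst = false` means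
Staller moves first (the S-game).  Dominator wins iff the set of vertices he has claimed at
the end of the game is a total dominating set of `G`. -/
def DominatorWinsMBTD (G : SimpleGraph V) (dFirst : Bool) : Prop :=
  WinsAux (fun a _ => IsTotalDomSet G a) (Fintype.card V) dFirst ∅ ∅

/-- Staller has a winning strategy in the Maker-Breaker total domination game on `G`,
where `dFirst = true` means Dominator moves first (the D-game) and `dFirst = false` means
Staller moves first (the S-game).  Staller wins iff she claims every vertex of the open
neighbourhood of some vertex. -/
def StallerWinsMBTD (G : SimpleGraph V) (dFirst : Bool) : Prop :=
  WinsAux (fun a _ => ∃ v : V, ∀ u : V, G.Adj u v → u ∈ a) (Fintype.card V) (!dFirst) ∅ ∅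

/-- `G` is a `𝒟` graph: Dominator wins both the D-game and the S-game. -/
def IsD (G : SimpleGraph V) : Prop :=
  DominatorWinsMBTD G true ∧ DominatorWinsMBTD G false

/-- `G` is an `𝒮` graph: Staller wins both the D-game and the S-game. -/
def IsS (G : SimpleGraph V) : Prop :=
  StallerWinsMBTD G true ∧ StallerWinsMBTD G false

/-- `G` is an `𝒩` graph: whichever player moves first wins. -/
def IsN (G : SimpleGraph V) : Prop :=
  DominatorWinsMBTD G true ∧ StallerWinsMBTD G false

/-- helper: inserting a free vertex decreases the free-set cardinality by one. -/
lemma card_free_insert {n : ℕ} (v : V) (a b : Finset V)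
    (hv : v ∈ Finset.univ \ (a ∪ b)) (h : (Finset.univ \ (a ∪ b)).card = n + 1) :
    (Finset.univ \ (insert v (a ∪ b))).card = n := by
  have heq : Finset.univ \ (insert v (a ∪ b)) = (Finset.univ \ (a ∪ b)).erase v := by
    ext w
    simp only [Finset.mem_sdiff, Finset.mem_erase, Finset.mem_insert, Finset.mem_univ,
      true_and]
    tauto
  rw [heq, Finset.card_erase_of_mem hv, h]
  omega

/-- pair `x1 x2` is safe for the tracked player. -/
def SafeP (x1 x2 : V) (a b : Finset V) : Prop :=
  (x1 ∈ a ∨ x2 ∈ a) ∨ (x1 ∉ b ∧ x2 ∉ b)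

/-- pair `x1 x2` is threatened: one end taken by opponent, other end free. -/
def ThrP (x1 x2 : V) (a b : Finset V) : Prop :=
  (x1 ∈ b ∧ x2 ∉ a ∧ x2 ∉ b) ∨ (x2 ∈ b ∧ x1 ∉ a ∧ x1 ∉ b)

lemma safeP_insert_a {x1 x2 v : V} {a b : Finset V} (h : SafeP x1 x2 a b) :
    SafeP x1 x2 (insert v a) b := by
  rcases h with (h | h) | h
  · exact Or.inl (Or.inl (Finset.mem_insert_of_mem h))
  · exact Or.inl (Or.inr (Finset.mem_insert_of_mem h))
  · exact Or.inr h

lemma maker_pairing (G : SimpleGraph V) (x1 x2 y1 y2 : V)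
    (hx : x1 ≠ x2) (hy : y1 ≠ y2)
    (hd1 : x1 ≠ y1) (hd2 : x1 ≠ y2) (hd3 : x2 ≠ y1) (hd4 : x2 ≠ y2)
    (hdom : ∀ a : Finset V, (x1 ∈ a ∨ x2 ∈ a) → (y1 ∈ a ∨ y2 ∈ a) → IsTotalDomSet G a) :
    ∀ n : ℕ,
      (∀ a b : Finset V, (Finset.univ \ (a ∪ b)).card = n →
        SafeP x1 x2 a b → SafeP y1 y2 a b →
        WinsAux (fun a _ => IsTotalDomSet G a) n false a b) ∧
      (∀ a b : Finset V, (Finset.univ \ (a ∪ b)).card = n →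
        ((SafeP x1 x2 a b ∧ SafeP y1 y2 a b) ∨
         (ThrP x1 x2 a b ∧ SafeP y1 y2 a b) ∨
         (SafeP x1 x2 a b ∧ ThrP y1 y2 a b)) →
        WinsAux (fun a _ => IsTotalDomSet G a) n true a b) := by
  intro n
  induction n with
  | zero =>
    have key : ∀ a b : Finset V, (Finset.univ \ (a ∪ b)).card = 0 →
        ∀ w : V, w ∈ a ∨ w ∈ b := by
      intro a b h w
      have := Finset.card_eq_zero.mp h
      have hw : w ∉ Finset.univ \ (a ∪ b) := by rw [this]; exact Finset.notMem_empty w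
      simp only [Finset.mem_sdiff, Finset.mem_univ, true_and, Finset.mem_union] at hw
      tauto
    constructor
    · intro a b hc hsx hsy
      show IsTotalDomSet G a
      apply hdom
      · rcases hsx with h | ⟨h1, h2⟩
        · exact h
        · have := key a b hc x1; tauto
      · rcases hsy with h | ⟨h1, h2⟩
        · exact h
        · have := key a b hc y1; tauto
    · intro a b hc hst
      show IsTotalDomSet G a
      have kx1 := key a b hc x1
      have kx2 := key a b hc x2
      have ky1 := key a b hc y1
      have ky2 := key a b hc y2
      apply hdom
      · rcases hst with ⟨hs, _⟩ | ⟨ht, _⟩ | ⟨hs, _⟩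
        · rcases hs with h | ⟨h1, h2⟩
          · exact h
          · tauto
        · rcases ht with ⟨_, h1, h2⟩ | ⟨_, h1, h2⟩ <;> tauto
        · rcases hs with h | ⟨h1, h2⟩
          · exact h
          · tauto
      · rcases hst with ⟨_, hs⟩ | ⟨_, hs⟩ | ⟨_, ht⟩
        · rcases hs with h | ⟨h1, h2⟩
          · exact h
          · tauto
        · rcases hs with h | ⟨h1, h2⟩
          · exact h
          · tauto
        · rcases ht with ⟨_, h1, h2⟩ | ⟨_, h1, h2⟩ <;> tauto
  | succ n ih =>
    constructor
    · -- Staller to move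
      intro a b hc hsx hsy
      show ∀ v ∈ Finset.univ \ (a ∪ b), WinsAux _ n true a (insert v b)
      intro v hv
      have hvb : v ∉ b := by
        simp only [Finset.mem_sdiff, Finset.mem_univ, true_and, Finset.mem_union] at hv; tauto
      have hva : v ∉ a := by
        simp only [Finset.mem_sdiff, Finset.mem_univ, true_and, Finset.mem_union] at hv; tauto
      have hc' : (Finset.univ \ (a ∪ insert v b)).card = n := by
        have := card_free_insert v a b hv hc
        rw [Finset.union_insert]; exact this
      apply (ih).2 a (insert v b) hc'
      -- analyse effect of v on each pair
      have hxcase : SafeP x1 x2 a (insert v b) ∨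
          (ThrP x1 x2 a (insert v b) ∧ (v = x1 ∨ v = x2)) := by
        rcases hsx with h | ⟨h1, h2⟩
        · exact Or.inl (Or.inl h)
        · by_cases e1 : v = x1
          · subst e1
            by_cases e2 : x2 ∈ a
            · exact Or.inl (Or.inl (Or.inr e2))
            · refine Or.inr ⟨Or.inl ⟨Finset.mem_insert_self _ _, e2, ?_⟩, Or.inl rfl⟩
              simp only [Finset.mem_insert]
              rintro (h | h)
              · exact hx h.symm
              · exact h2 h
          · by_cases e2 : v = x2
            · subst e2
              by_cases e3 : x1 ∈ a
              · exact Or.inl (Or.inl (Or.inl e3))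
              · refine Or.inr ⟨Or.inr ⟨Finset.mem_insert_self _ _, e3, ?_⟩, Or.inr rfl⟩
                simp only [Finset.mem_insert]
                rintro (h | h)
                · exact hx h
                · exact h1 h
            · refine Or.inl (Or.inr ⟨?_, ?_⟩) <;>
                simp only [Finset.mem_insert] <;> rintro (h | h) <;>
                first | exact e1 h.symm | exact e2 h.symm | exact h1 h | exact h2 h
      have hycase : SafeP y1 y2 a (insert v b) ∨
          (ThrP y1 y2 a (insert v b) ∧ (v = y1 ∨ v = y2)) := by
        rcases hsy with h | ⟨h1, h2⟩
        · exact Or.inl (Or.inl h)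
        · by_cases e1 : v = y1
          · subst e1
            by_cases e2 : y2 ∈ a
            · exact Or.inl (Or.inl (Or.inr e2))
            · refine Or.inr ⟨Or.inl ⟨Finset.mem_insert_self _ _, e2, ?_⟩, Or.inl rfl⟩
              simp only [Finset.mem_insert]
              rintro (h | h)
              · exact hy h.symm
              · exact h2 h
          · by_cases e2 : v = y2
            · subst e2
              by_cases e3 : y1 ∈ a
              · exact Or.inl (Or.inl (Or.inl e3))
              · refine Or.inr ⟨Or.inr ⟨Finset.mem_insert_self _ _, e3, ?_⟩, Or.inr rfl⟩
                simp only [Finset.mem_insert]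
                rintro (h | h)
                · exact hy h
                · exact h1 h
            · refine Or.inl (Or.inr ⟨?_, ?_⟩) <;>
                simp only [Finset.mem_insert] <;> rintro (h | h) <;>
                first | exact e1 h.symm | exact e2 h.symm | exact h1 h | exact h2 h
      rcases hxcase with hX | ⟨hX, hvx⟩
      · rcases hycase with hY | ⟨hY, _⟩
        · exact Or.inl ⟨hX, hY⟩
        · exact Or.inr (Or.inr ⟨hX, hY⟩)
      · rcases hycase with hY | ⟨hY, hvy⟩
        · exact Or.inr (Or.inl ⟨hX, hY⟩)
        · exfalso
          rcases hvx with rfl | rfl <;> rcases hvy with h | h <;>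
            first | exact hd1 h | exact hd2 h | exact hd3 h | exact hd4 h
    · -- Dominator to move
      intro a b hc hst
      show ∃ v ∈ Finset.univ \ (a ∪ b), WinsAux _ n false (insert v a) b
      rcases hst with ⟨hsx, hsy⟩ | ⟨htx, hsy⟩ | ⟨hsx, hty⟩
      · -- both safe: any move
        have hne : (Finset.univ \ (a ∪ b)).Nonempty := by
          rw [← Finset.card_pos, hc]; omega
        obtain ⟨v, hv⟩ := hne
        refine ⟨v, hv, ?_⟩
        have hc' : (Finset.univ \ (insert v a ∪ b)).card = n := by
          have := card_free_insert v a b hv hc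
          rw [Finset.insert_union]; exact this
        exact (ih).1 _ _ hc' (safeP_insert_a hsx) (safeP_insert_a hsy)
      · -- x pair threatened: grab the free end
        obtain ⟨w, hwb, hwfree, hsx'⟩ :
            ∃ w, w ∉ a ∧ w ∉ b ∧ SafeP x1 x2 (insert w a) b := by
          rcases htx with ⟨_, h1, h2⟩ | ⟨_, h1, h2⟩
          · exact ⟨x2, h1, h2, Or.inl (Or.inr (Finset.mem_insert_self _ _))⟩
          · exact ⟨x1, h1, h2, Or.inl (Or.inl (Finset.mem_insert_self _ _))⟩
        have hv : w ∈ Finset.univ \ (a ∪ b) := by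
          simp only [Finset.mem_sdiff, Finset.mem_univ, true_and, Finset.mem_union]; tauto
        refine ⟨w, hv, ?_⟩
        have hc' : (Finset.univ \ (insert w a ∪ b)).card = n := by
          have := card_free_insert w a b hv hc
          rw [Finset.insert_union]; exact this
        exact (ih).1 _ _ hc' hsx' (safeP_insert_a hsy)
      · obtain ⟨w, hwb, hwfree, hsy'⟩ :
            ∃ w, w ∉ a ∧ w ∉ b ∧ SafeP y1 y2 (insert w a) b := by
          rcases hty with ⟨_, h1, h2⟩ | ⟨_, h1, h2⟩
          · exact ⟨y2, h1, h2, Or.inl (Or.inr (Finset.mem_insert_self _ _))⟩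
          · exact ⟨y1, h1, h2, Or.inl (Or.inl (Finset.mem_insert_self _ _))⟩
        have hv : w ∈ Finset.univ \ (a ∪ b) := by
          simp only [Finset.mem_sdiff, Finset.mem_univ, true_and, Finset.mem_union]; tauto
        refine ⟨w, hv, ?_⟩
        have hc' : (Finset.univ \ (insert w a ∪ b)).card = n := by
          have := card_free_insert w a b hv hc
          rw [Finset.insert_union]; exact this
        exact (ih).1 _ _ hc' (safeP_insert_a hsx) hsy'

lemma breaker_block (G : SimpleGraph V) (x w : V)
    (hw : ∀ u : V, G.Adj u w → u = x) :
    ∀ n : ℕ, ∀ (turn : Bool) (a b : Finset V),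
      (Finset.univ \ (a ∪ b)).card = n → x ∈ b → x ∉ a →
      ¬ WinsAux (fun a _ => IsTotalDomSet G a) n turn a b := by
  intro n
  induction n with
  | zero =>
    intro turn a b _ hxb hxa hwin
    obtain ⟨u, hu, hadj⟩ := (hwin : IsTotalDomSet G a) w
    exact hxa ((hw u hadj) ▸ hu)
  | succ n ih =>
    intro turn a b hc hxb hxa hwin
    cases turn with
    | true =>
      obtain ⟨v, hv, hrec⟩ := hwin
      have hvx : v ≠ x := by
        simp only [Finset.mem_sdiff, Finset.mem_univ, true_and, Finset.mem_union] at hv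
        intro h; exact hv (Or.inr (h ▸ hxb))
      have hc' : (Finset.univ \ (insert v a ∪ b)).card = n := by
        have := card_free_insert v a b hv hc
        rw [Finset.insert_union]; exact this
      exact ih false (insert v a) b hc' hxb
        (by simp only [Finset.mem_insert]; rintro (h | h); exact hvx h.symm; exact hxa h) hrec
    | false =>
      have hne : (Finset.univ \ (a ∪ b)).Nonempty := by
        rw [← Finset.card_pos, hc]; omega
      obtain ⟨v, hv⟩ := hne
      have hc' : (Finset.univ \ (a ∪ insert v b)).card = n := by
        have := card_free_insert v a b hv hc
        rw [Finset.union_insert]; exact this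
      exact ih true a (insert v b) hc' (Finset.mem_insert_of_mem hxb) hxa (hwin v hv)


lemma notD_del (k : ℕ) (i : Fin 2) (j : Fin k) :
    ¬ IsD ((completeBipartiteGraph (Fin 2) (Fin k)).deleteEdges
      {s(Sum.inl i, Sum.inr j)}) := by
  set G' := (completeBipartiteGraph (Fin 2) (Fin k)).deleteEdges
      {s(Sum.inl i, Sum.inr j)} with hG'
  intro hD
  have hS := hD.2
  set x : Fin 2 ⊕ Fin k := Sum.inl (if i = 0 then 1 else 0) with hxdef
  have hw : ∀ u, G'.Adj u (Sum.inr j) → u = x := by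
    intro u hadj
    rw [hG', SimpleGraph.deleteEdges_adj] at hadj
    obtain ⟨hadj, hne⟩ := hadj
    cases u with
    | inr j' => simp at hadj
    | inl i' =>
      have hii : i' ≠ i := by
        rintro rfl
        exact hne (by simp)
      have : i' = if i = 0 then 1 else 0 := by
        fin_cases i <;> fin_cases i' <;> simp_all
      rw [hxdef, this]
  have hcard : Fintype.card (Fin 2 ⊕ Fin k) = k + 2 := by
    simp [Fintype.card_sum]; omega
  rw [DominatorWinsMBTD, hcard] at hS
  simp only [WinsAux] at hS
  have hx : x ∈ Finset.univ \ ((∅ : Finset (Fin 2 ⊕ Fin k)) ∪ ∅) := by simp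
  have hrec := hS x hx
  have hc : (Finset.univ \ ((∅ : Finset (Fin 2 ⊕ Fin k)) ∪ insert x ∅)).card = k + 1 := by
    rw [Finset.empty_union]
    have h1 : (Finset.univ \ (insert x (∅ : Finset (Fin 2 ⊕ Fin k)))).card
        = Fintype.card (Fin 2 ⊕ Fin k) - 1 := by
      rw [Finset.card_sdiff_of_subset (Finset.subset_univ _)]
      simp
    omega
  exact breaker_block G' x (Sum.inr j) hw (k + 1) true ∅ (insert x ∅) hc
    (Finset.mem_insert_self _ _) (Finset.notMem_empty x) hrec

/-- for `k ≥ 2` the complete bipartite graph `K_{2,k}` is `𝒟`-minimal: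
it is a `𝒟` graph, but deleting any edge yields a graph that is not `𝒟`. -/
theorem stmt16 (k : ℕ) (hk : 2 ≤ k) :
    IsD (completeBipartiteGraph (Fin 2) (Fin k)) ∧
    ∀ e ∈ (completeBipartiteGraph (Fin 2) (Fin k)).edgeSet,
      ¬ IsD ((completeBipartiteGraph (Fin 2) (Fin k)).deleteEdges {e}) := by
  constructor
  · -- K_{2,k} is a D graph, via the pairing strategy
    set G := completeBipartiteGraph (Fin 2) (Fin k) with hG
    set y1 : Fin k := ⟨0, by omega⟩ with hy1
    set y2 : Fin k := ⟨1, by omega⟩ with hy2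
    have hdom : ∀ a : Finset (Fin 2 ⊕ Fin k),
        ((Sum.inl 0 : Fin 2 ⊕ Fin k) ∈ a ∨ (Sum.inl 1 : Fin 2 ⊕ Fin k) ∈ a) →
        ((Sum.inr y1 : Fin 2 ⊕ Fin k) ∈ a ∨ (Sum.inr y2 : Fin 2 ⊕ Fin k) ∈ a) →
        IsTotalDomSet G a := by
      intro a h1 h2 v
      cases v with
      | inl i =>
        rcases h2 with h | h
        · exact ⟨Sum.inr y1, h, by simp [hG]⟩
        · exact ⟨Sum.inr y2, h, by simp [hG]⟩
      | inr j =>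
        rcases h1 with h | h
        · exact ⟨Sum.inl 0, h, by simp [hG]⟩
        · exact ⟨Sum.inl 1, h, by simp [hG]⟩
    have hy12 : y1 ≠ y2 := by
      rw [hy1, hy2]; intro h; simpa using congrArg Fin.val h
    have hmp := maker_pairing G (Sum.inl 0) (Sum.inl 1) (Sum.inr y1) (Sum.inr y2)
      (by simp) (by simp [hy12]) (by simp) (by simp) (by simp) (by simp) hdom
    have hcE : (Finset.univ \ ((∅ : Finset (Fin 2 ⊕ Fin k)) ∪ ∅)).card
        = Fintype.card (Fin 2 ⊕ Fin k) := by simp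
    have hsafe : SafeP (Sum.inl 0 : Fin 2 ⊕ Fin k) (Sum.inl 1) ∅ ∅ ∧
        SafeP (Sum.inr y1 : Fin 2 ⊕ Fin k) (Sum.inr y2) ∅ ∅ :=
      ⟨Or.inr ⟨Finset.notMem_empty _, Finset.notMem_empty _⟩,
       Or.inr ⟨Finset.notMem_empty _, Finset.notMem_empty _⟩⟩
    exact ⟨(hmp (Fintype.card (Fin 2 ⊕ Fin k))).2 ∅ ∅ hcE (Or.inl hsafe),
           (hmp (Fintype.card (Fin 2 ⊕ Fin k))).1 ∅ ∅ hcE hsafe.1 hsafe.2⟩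
  · intro e he
    induction e using Sym2.ind with
    | _ u v =>
      rw [SimpleGraph.mem_edgeSet] at he
      rcases u with i | j <;> rcases v with i' | j'
      · simp at he
      · exact notD_del k i j'
      · rw [Sym2.eq_swap]
        exact notD_del k i' j
      · simp at he

end MBTD
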